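/- In a pointed regular category, for a morphism i : I → Y the following are equivalent: (i) i is an ideal; (ii) i is the zero-class of a surjective left split relation; (iii) i is the zero-class of a surjective relation. -/

import Mathlib

open CategoryTheory CategoryTheory.Limits

universe v u

variable {C : Type u} [Category.{v} C]

/-- `i : I ⟶ Y` is a zero-class of the span `(d : R ⟶ X, c : R ⟶ Y)`:
it fits in a pullback of `⟨d,c⟩` along `⟨0, 1_Y⟩`. -/
def IsZeroClass [HasZeroMorphisms C] [HasBinaryProducts C]
    {R X Y I : C} (d : R ⟶ X) (c : R ⟶ Y) (i : I ⟶ Y) : Prop :=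
  ∃ l : I ⟶ R, IsPullback l i (prod.lift d c) (prod.lift (0 : Y ⟶ X) (𝟙 Y))

/-- `k : K ⟶ X` is a clot: a monomorphism which is the zero-class of a reflexive
relation on `X`. -/
def IsClot [HasZeroMorphisms C] [HasBinaryProducts C] {K X : C} (k : K ⟶ X) : Prop :=
  Mono k ∧ ∃ (R : C) (d c : R ⟶ X) (e : X ⟶ R),
    Mono (prod.lift d c) ∧ e ≫ d = 𝟙 X ∧ e ≫ c = 𝟙 X ∧ IsZeroClass d c k

/-- `i : I ⟶ Y` is an ideal: a monomorphism which is the regular image of a clot,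
i.e. there are a clot `k : K ⟶ X` and regular epimorphisms `p : X ⟶ Y`, `q : K ⟶ I`
with `i ∘ q = p ∘ k`. -/
def IsIdeal [HasZeroMorphisms C] [HasBinaryProducts C] {I Y : C} (i : I ⟶ Y) : Prop :=
  Mono i ∧ ∃ (K X : C) (k : K ⟶ X) (p : X ⟶ Y) (q : K ⟶ I),
    IsClot k ∧ Nonempty (RegularEpi p) ∧ Nonempty (RegularEpi q) ∧ q ≫ i = k ≫ p

/-- A regular category: finitely complete, with coequalizers of kernel pairs,
and regular epimorphisms stable under pullback. -/
class RegularCategory (C : Type u) [Category.{v} C] extends HasFiniteLimits C : Prop where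
  hasCoequalizerOfKernelPair : ∀ {X Y : C} (f : X ⟶ Y),
    HasCoequalizer (pullback.fst f f) (pullback.snd f f)
  regularEpiStable : ∀ {P X Y Z : C} (f : X ⟶ Z) (g : Y ⟶ Z) (fst : P ⟶ X) (snd : P ⟶ Y),
    IsPullback fst snd f g → Nonempty (RegularEpi f) → Nonempty (RegularEpi snd)

lemma isPullback_iso_comp {P P' X Y Z : C} (ψ : P ⟶ P') [IsIso ψ]
    {a : P' ⟶ X} {b : P' ⟶ Y} {f : X ⟶ Z} {g : Y ⟶ Z}
    (h : IsPullback a b f g) : IsPullback (ψ ≫ a) (ψ ≫ b) f g := by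
  apply IsPullback.of_isLimit' ⟨by rw [Category.assoc, Category.assoc, h.w]⟩
  refine PullbackCone.IsLimit.mk _ (fun s => h.lift s.fst s.snd s.condition ≫ inv ψ)
    (fun s => ?_) (fun s => ?_) (fun s m h1 h2 => ?_)
  · simp [h.lift_fst]
  · simp [h.lift_snd]
  · have hm : (m ≫ ψ) = h.lift s.fst s.snd s.condition := by
      apply h.hom_ext <;> simp [h1, h2, h.lift_fst, h.lift_snd]
    show m = h.lift s.fst s.snd s.condition ≫ inv ψ
    rw [← hm]; simp

lemma regular_image [RegularCategory C] {A B : C} (f : A ⟶ B) :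
    ∃ (E : C) (ρ : A ⟶ E) (μ : E ⟶ B), Nonempty (RegularEpi ρ) ∧ Mono μ ∧ ρ ≫ μ = f := by
  haveI := RegularCategory.hasCoequalizerOfKernelPair (C := C) f
  set q := coequalizer.π (pullback.fst f f) (pullback.snd f f) with hqdef
  set m := coequalizer.desc f pullback.condition with hmdef
  have hqm : q ≫ m = f := coequalizer.π_desc _ _
  refine ⟨_, q, m, ⟨coequalizerRegular _ _⟩, ?_, hqm⟩
  have huv : pullback.fst m m = pullback.snd m m := by
    set u := pullback.fst m m with hu
    set v := pullback.snd m m with hv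
    obtain ⟨re1⟩ := RegularCategory.regularEpiStable q u (pullback.fst q u)
      (pullback.snd q u) (IsPullback.of_hasPullback q u) ⟨coequalizerRegular _ _⟩
    haveI := RegularEpi.epi _ re1
    set π₁ := pullback.snd q u with hπ₁
    set a := pullback.fst q u with ha
    obtain ⟨re2⟩ := RegularCategory.regularEpiStable q (π₁ ≫ v)
      (pullback.fst q (π₁ ≫ v)) (pullback.snd q (π₁ ≫ v))
      (IsPullback.of_hasPullback q (π₁ ≫ v)) ⟨coequalizerRegular _ _⟩
    haveI := RegularEpi.epi _ re2
    set π₂ := pullback.snd q (π₁ ≫ v) with hπ₂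
    set b := pullback.fst q (π₁ ≫ v) with hb
    have h1 : a ≫ q = π₁ ≫ u := pullback.condition
    have h2 : b ≫ q = π₂ ≫ (π₁ ≫ v) := pullback.condition
    have hf : (π₂ ≫ a) ≫ f = b ≫ f := by
      have e1 : (π₂ ≫ a) ≫ q ≫ m = b ≫ q ≫ m := by
        calc (π₂ ≫ a) ≫ q ≫ m = (π₂ ≫ (a ≫ q)) ≫ m := by simp only [Category.assoc]
          _ = (π₂ ≫ π₁ ≫ u) ≫ m := by rw [h1]
          _ = (π₂ ≫ π₁) ≫ u ≫ m := by simp only [Category.assoc]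
          _ = (π₂ ≫ π₁) ≫ v ≫ m := by rw [pullback.condition]
          _ = (b ≫ q) ≫ m := by rw [h2]; simp only [Category.assoc]
          _ = b ≫ q ≫ m := by simp only [Category.assoc]
      rw [hqm] at e1; exact e1
    set t := pullback.lift (π₂ ≫ a) b hf with ht
    have hcoeq : pullback.fst f f ≫ q = pullback.snd f f ≫ q := coequalizer.condition _ _
    have key : (π₂ ≫ π₁) ≫ u = (π₂ ≫ π₁) ≫ v := by
      calc (π₂ ≫ π₁) ≫ u = π₂ ≫ (a ≫ q) := by rw [h1]; simp only [Category.assoc]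
        _ = (π₂ ≫ a) ≫ q := by simp only [Category.assoc]
        _ = t ≫ pullback.fst f f ≫ q := by rw [← Category.assoc, pullback.lift_fst]
        _ = t ≫ pullback.snd f f ≫ q := by rw [hcoeq]
        _ = b ≫ q := by rw [← Category.assoc, pullback.lift_snd]
        _ = (π₂ ≫ π₁) ≫ v := by rw [h2]; simp only [Category.assoc]
    haveI : Epi (π₂ ≫ π₁) := epi_comp _ _
    exact (cancel_epi (π₂ ≫ π₁)).mp key
  constructor
  intro T x y hxy
  calc x = pullback.lift x y hxy ≫ pullback.fst m m := (pullback.lift_fst _ _ _).symm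
    _ = pullback.lift x y hxy ≫ pullback.snd m m := by rw [huv]
    _ = y := pullback.lift_snd _ _ _

lemma regularEpi_of_strongEpi [RegularCategory C] {A B : C} (f : A ⟶ B) [StrongEpi f] :
    Nonempty (RegularEpi f) := by
  obtain ⟨E, ρ, μ, ⟨hρ⟩, hμ, hfac⟩ := regular_image f
  haveI := isRegularEpi_of_regularEpi hρ; haveI := hμ
  have sq : CommSq ρ f μ (𝟙 B) := ⟨by simp [hfac]⟩
  haveI : IsSplitEpi μ := ⟨⟨⟨sq.lift, sq.fac_right⟩⟩⟩
  haveI : IsIso μ := isIso_of_mono_of_isSplitEpi μ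
  have w' : hρ.left ≫ f = hρ.right ≫ f := by
    rw [← hfac, ← Category.assoc, ← Category.assoc, hρ.w]
  exact ⟨{ W := hρ.W, left := hρ.left, right := hρ.right, w := w',
           isColimit := IsColimit.ofIsoColimit hρ.isColimit
             (Cofork.ext (asIso μ) (by simp [hfac])) }⟩

lemma regularEpi_comp' [RegularCategory C] {A B D : C} (f : A ⟶ B) (g : B ⟶ D)
    (hf : Nonempty (RegularEpi f)) (hg : Nonempty (RegularEpi g)) :
    Nonempty (RegularEpi (f ≫ g)) := by
  haveI := isRegularEpi_of_regularEpi hf.some; haveI := isRegularEpi_of_regularEpi hg.some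
  haveI : StrongEpi (f ≫ g) := strongEpi_comp f g
  exact regularEpi_of_strongEpi _

lemma regularEpi_of_comp [RegularCategory C] {A B D : C} (f : A ⟶ B) (g : B ⟶ D)
    (hfg : Nonempty (RegularEpi (f ≫ g))) : Nonempty (RegularEpi g) := by
  haveI := isRegularEpi_of_regularEpi hfg.some
  haveI : StrongEpi (f ≫ g) := inferInstance
  haveI : StrongEpi g := strongEpi_of_strongEpi f g
  exact regularEpi_of_strongEpi _

section MainLemmas

variable {C : Type u} [Category.{v} C] [HasZeroMorphisms C] [RegularCategory C]

lemma mono_zero_lift {X Y : C} : Mono (prod.lift (0 : Y ⟶ X) (𝟙 Y)) := by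
  have h : Mono (prod.lift (0 : Y ⟶ X) (𝟙 Y) ≫ prod.snd) := by
    rw [prod.lift_snd]; infer_instance
  exact mono_of_mono _ prod.snd

/-- (iii) ⟹ (i) -/
lemma isIdeal_of_zeroClass_surjective {I Y : C} (i : I ⟶ Y)
    (h : ∃ (X R : C) (d : R ⟶ X) (c : R ⟶ Y),
        Mono (prod.lift d c) ∧ Nonempty (RegularEpi c) ∧ IsZeroClass d c i) :
    IsIdeal i := by
  obtain ⟨X, R, d, c, hmono, hc, l, hpb⟩ := h
  have hw : l ≫ prod.lift d c = i ≫ prod.lift (0 : Y ⟶ X) (𝟙 Y) := hpb.w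
  have hld : l ≫ d = 0 := by
    have h1 := hw =≫ prod.fst
    simpa [prod.lift_fst, prod.lift_snd] using h1
  have hlc : l ≫ c = i := by
    have h1 := hw =≫ prod.snd
    simpa [prod.lift_fst, prod.lift_snd] using h1
  have monoI : Mono i := by
    constructor
    intro T x y hxy
    have hxl : x ≫ l = y ≫ l := by
      rw [← cancel_mono (prod.lift d c)]
      rw [Category.assoc, Category.assoc, hw, ← Category.assoc, ← Category.assoc, hxy]
    exact hpb.hom_ext hxl hxy
  have monoL : Mono l := by
    constructor
    intro T x y hxl
    have hxi : x ≫ i = y ≫ i := by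
      rw [← hlc, ← Category.assoc, ← Category.assoc, hxl]
    exact hpb.hom_ext hxl hxi
  -- kernel pair of d as reflexive relation on R
  set p1 := pullback.fst d d with hp1
  set p2 := pullback.snd d d with hp2
  have monoPair : Mono (prod.lift p1 p2) := by
    constructor
    intro T x y hxy
    have e1 := hxy =≫ prod.fst
    have e2 := hxy =≫ prod.snd
    simp only [Category.assoc, prod.lift_fst, prod.lift_snd] at e1 e2
    exact pullback.hom_ext e1 e2
  have hm0 : (0 : I ⟶ R) ≫ d = l ≫ d := by simp [hld]
  set m : I ⟶ pullback d d := pullback.lift 0 l hm0 with hm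
  have hmp1 : m ≫ p1 = 0 := pullback.lift_fst _ _ _
  have hmp2 : m ≫ p2 = l := pullback.lift_snd _ _ _
  have sq : CommSq m l (prod.lift p1 p2) (prod.lift (0 : R ⟶ R) (𝟙 R)) := by
    constructor
    apply Limits.prod.hom_ext <;> simp [hmp1, hmp2]
  have hzc : IsPullback m l (prod.lift p1 p2) (prod.lift (0 : R ⟶ R) (𝟙 R)) := by
    apply IsPullback.of_isLimit' sq
    refine PullbackCone.IsLimit.mk _ (fun s => ?lift) (fun s => ?_) (fun s => ?_)
      (fun s t ht1 ht2 => ?_)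
    case lift =>
      have h1 : s.fst ≫ p1 = 0 := by
        have := s.condition =≫ prod.fst
        simpa [prod.lift_fst, prod.lift_snd] using this
      have h2 : s.fst ≫ p2 = s.snd := by
        have := s.condition =≫ prod.snd
        simpa [prod.lift_fst, prod.lift_snd] using this
      have hsd : s.snd ≫ d = 0 := by
        rw [← h2, Category.assoc, ← pullback.condition, ← Category.assoc, h1, zero_comp]
      exact hpb.lift s.snd (s.snd ≫ c) (by apply Limits.prod.hom_ext <;> simp [hsd])
    · -- fac left : lift ≫ m = s.fst
      have h1 : s.fst ≫ p1 = 0 := by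
        have := s.condition =≫ prod.fst
        simpa [prod.lift_fst, prod.lift_snd] using this
      have h2 : s.fst ≫ p2 = s.snd := by
        have := s.condition =≫ prod.snd
        simpa [prod.lift_fst, prod.lift_snd] using this
      apply pullback.hom_ext
      · show (_ ≫ m) ≫ p1 = _
        rw [Category.assoc, hmp1, comp_zero, h1]
      · show (_ ≫ m) ≫ p2 = _
        rw [Category.assoc, hmp2, hpb.lift_fst, h2]
    · exact hpb.lift_fst _ _ _
    · -- uniqueness
      have h2 : t ≫ l = s.snd := ht2
      have h3 : t ≫ i = s.snd ≫ c := by rw [← hlc, ← Category.assoc, h2]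
      apply hpb.hom_ext
      · rw [h2, hpb.lift_fst]
      · rw [h3, hpb.lift_snd]
  have e0 : pullback d d ⟶ pullback d d := 𝟙 _
  refine ⟨monoI, I, R, l, c, 𝟙 I, ?_, hc, ⟨RegularEpi.ofIso (Iso.refl I)⟩, by rw [Category.id_comp, hlc]⟩
  refine ⟨monoL, pullback d d, p1, p2, pullback.lift (𝟙 R) (𝟙 R) rfl, monoPair, ?_, ?_, m, hzc⟩
  · simp [hp1, pullback.lift_fst]
  · simp [hp2, pullback.lift_snd]

/-- (i) ⟹ (ii) -/
lemma zeroClass_of_isIdeal {I Y : C} (i : I ⟶ Y) (h : IsIdeal i) :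
    ∃ (X R : C) (d : R ⟶ X) (c : R ⟶ Y) (e : X ⟶ R),
      Mono (prod.lift d c) ∧ e ≫ d = 𝟙 X ∧ Nonempty (RegularEpi c) ∧
      IsZeroClass d c i := by
  obtain ⟨hmi, K, X, k, p, q, ⟨hmk, R₀, d₀, c₀, e₀, hm0, hed, hec, m₀, hKpb⟩, hp, hq, hcomm⟩ := h
  obtain ⟨R', ρ, μ, hρ, hμ, hfac⟩ := regular_image (prod.lift d₀ (c₀ ≫ p))
  haveI := hμ
  have hlift : prod.lift (μ ≫ prod.fst) (μ ≫ prod.snd) = μ := by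
    apply Limits.prod.hom_ext <;> simp [prod.lift_fst, prod.lift_snd]
  have hρd : ρ ≫ μ ≫ prod.fst = d₀ := by
    rw [← Category.assoc, hfac, prod.lift_fst]
  have hρc : ρ ≫ μ ≫ prod.snd = c₀ ≫ p := by
    rw [← Category.assoc, hfac, prod.lift_snd]
  -- components of the clot square
  have hKw : m₀ ≫ prod.lift d₀ c₀ = k ≫ prod.lift (0 : X ⟶ X) (𝟙 X) := hKpb.w
  have hm0d : m₀ ≫ d₀ = 0 := by
    have := hKw =≫ prod.fst; simpa [prod.lift_fst, prod.lift_snd] using this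
  have hm0c : m₀ ≫ c₀ = k := by
    have := hKw =≫ prod.snd; simpa [prod.lift_fst, prod.lift_snd] using this
  -- the big pullback square (zero-class of the span (d₀, c₀ ≫ p) is k ≫ p)
  have sqBig : CommSq m₀ (k ≫ p) (prod.lift d₀ (c₀ ≫ p)) (prod.lift (0 : Y ⟶ X) (𝟙 Y)) := by
    constructor
    apply Limits.prod.hom_ext
    · simp [hm0d, prod.lift_fst]
    · simp only [Category.assoc, prod.lift_snd, prod.comp_lift, Category.comp_id]
      rw [← Category.assoc, hm0c]
  have hBig : IsPullback m₀ (k ≫ p) (prod.lift d₀ (c₀ ≫ p)) (prod.lift (0 : Y ⟶ X) (𝟙 Y)) := by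
    apply IsPullback.of_isLimit' sqBig
    refine PullbackCone.IsLimit.mk _ (fun s => ?lift) (fun s => ?_) (fun s => ?_)
      (fun s t ht1 ht2 => ?_)
    case lift =>
      have h1 : s.fst ≫ d₀ = 0 := by
        have := s.condition =≫ prod.fst; simpa [prod.lift_fst, prod.lift_snd] using this
      exact hKpb.lift s.fst (s.fst ≫ c₀) (by apply Limits.prod.hom_ext <;> simp [h1])
    · exact hKpb.lift_fst _ _ _
    · have h2 : s.fst ≫ c₀ ≫ p = s.snd := by
        have := s.condition =≫ prod.snd; simpa [prod.lift_fst, prod.lift_snd] using this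
      show _ ≫ k ≫ p = s.snd
      rw [← Category.assoc, hKpb.lift_snd, Category.assoc, h2]
    · -- uniqueness
      have h3 : t ≫ k = s.fst ≫ c₀ := by
        rw [← hm0c, ← Category.assoc, ht1]
      apply hKpb.hom_ext
      · rw [ht1, hKpb.lift_fst]
      · rw [h3, hKpb.lift_snd]
  -- chosen pullback of μ along ⟨0,1⟩
  set l' := pullback.fst μ (prod.lift (0 : Y ⟶ X) (𝟙 Y)) with hl'
  set i' := pullback.snd μ (prod.lift (0 : Y ⟶ X) (𝟙 Y)) with hi'
  have hI' : IsPullback l' i' μ (prod.lift (0 : Y ⟶ X) (𝟙 Y)) := IsPullback.of_hasPullback _ _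
  haveI monoi' : Mono i' := by rw [hi']; infer_instance
  -- pullback of ρ along l'
  have hPb : IsPullback (pullback.fst ρ l') (pullback.snd ρ l') ρ l' :=
    IsPullback.of_hasPullback _ _
  have hBig2 : IsPullback (pullback.fst ρ l') (pullback.snd ρ l' ≫ i') (ρ ≫ μ)
      (prod.lift (0 : Y ⟶ X) (𝟙 Y)) := IsPullback.paste_vert hPb hI'
  rw [hfac] at hBig2
  -- compare the two pullbacks
  set φ := (hBig.isoIsPullback _ _ hBig2).hom with hφ
  have hφ1 : φ ≫ pullback.fst ρ l' = m₀ := by simp [hφ]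
  have hφ2 : φ ≫ pullback.snd ρ l' ≫ i' = k ≫ p := by
    have h5 := hBig.isoIsPullback_hom_snd (h' := hBig2)
    rw [hφ]; exact h5
  haveI : IsIso φ := inferInstance
  -- pullback.snd ρ l' is a regular epi by stability
  obtain ⟨reSnd⟩ := RegularCategory.regularEpiStable ρ l' (pullback.fst ρ l')
    (pullback.snd ρ l') hPb hρ
  haveI := isRegularEpi_of_regularEpi reSnd
  have hφsnd : Nonempty (RegularEpi (φ ≫ pullback.snd ρ l')) := by
    haveI : StrongEpi (φ ≫ pullback.snd ρ l') := strongEpi_comp _ _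
    exact regularEpi_of_strongEpi _
  -- uniqueness of regular epi - mono factorizations of k ≫ p
  haveI := isRegularEpi_of_regularEpi hq.some
  have sq1 : CommSq (φ ≫ pullback.snd ρ l') q i' i := by
    constructor
    rw [Category.assoc, hφ2, ← hcomm]
  set ψ := sq1.lift with hψ
  have hψ1 : q ≫ ψ = φ ≫ pullback.snd ρ l' := sq1.fac_left
  have hψ2 : ψ ≫ i' = i := sq1.fac_right
  haveI := isRegularEpi_of_regularEpi hφsnd.some
  have sq2 : CommSq q (φ ≫ pullback.snd ρ l') i i' := by
    constructor
    rw [Category.assoc, hφ2, hcomm]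
  set ψ' := sq2.lift with hψ'
  have hψ'1 : (φ ≫ pullback.snd ρ l') ≫ ψ' = q := sq2.fac_left
  have hψ'2 : ψ' ≫ i = i' := sq2.fac_right
  haveI : IsIso ψ := by
    refine ⟨ψ', ?_, ?_⟩
    · rw [← cancel_mono i]
      rw [Category.assoc, hψ'2, hψ2, Category.id_comp]
    · rw [← cancel_mono i']
      rw [Category.assoc, hψ2, hψ'2, Category.id_comp]
  refine ⟨X, R', μ ≫ prod.fst, μ ≫ prod.snd, e₀ ≫ ρ, ?_, ?_, ?_, ?_⟩
  · rw [hlift]; exact hμ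
  · rw [Category.assoc, hρd, hed]
  · -- μ ≫ prod.snd is a regular epi
    haveI : IsSplitEpi c₀ := ⟨⟨⟨e₀, hec⟩⟩⟩
    have hc₀p : Nonempty (RegularEpi (c₀ ≫ p)) := regularEpi_comp' _ _ ⟨RegularEpi.ofSplitEpi _⟩ hp
    rw [← hρc] at hc₀p
    exact regularEpi_of_comp ρ _ hc₀p
  · refine ⟨ψ ≫ l', ?_⟩
    rw [hlift]
    have hfin := isPullback_iso_comp ψ hI'
    rw [hψ2] at hfin
    exact hfin

end MainLemmas

/-- **Main theorem.** In a pointed regular category, for a morphism `i : I ⟶ Y` the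
following are equivalent: (i) `i` is an ideal; (ii) `i` is the zero-class of a surjective
left split relation; (iii) `i` is the zero-class of a surjective relation. -/
theorem isIdeal_iff_zeroClass_surjective_relation {C : Type u} [Category.{v} C]
    [HasZeroObject C] [HasZeroMorphisms C] [RegularCategory C]
    {I Y : C} (i : I ⟶ Y) :
    (IsIdeal i ↔
      ∃ (X R : C) (d : R ⟶ X) (c : R ⟶ Y) (e : X ⟶ R),
        Mono (prod.lift d c) ∧ e ≫ d = 𝟙 X ∧ Nonempty (RegularEpi c) ∧
        IsZeroClass d c i) ∧
    (IsIdeal i ↔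
      ∃ (X R : C) (d : R ⟶ X) (c : R ⟶ Y),
        Mono (prod.lift d c) ∧ Nonempty (RegularEpi c) ∧ IsZeroClass d c i) := by
  refine ⟨⟨fun h => zeroClass_of_isIdeal i h, fun h => ?_⟩,
    ⟨fun h => ?_, fun h => isIdeal_of_zeroClass_surjective i h⟩⟩
  · obtain ⟨X, R, d, c, e, h1, h2, h3, h4⟩ := h
    exact isIdeal_of_zeroClass_surjective i ⟨X, R, d, c, h1, h3, h4⟩
  · obtain ⟨X, R, d, c, e, h1, h2, h3, h4⟩ := zeroClass_of_isIdeal i h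
    exact ⟨X, R, d, c, h1, h3, h4⟩
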